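/- Let κ > 0 and k₁, k₂ ∈ ℝ with 0 < κ·k₂ < κ·k₁ < 1. Set P₁ = (1 − κk₁)/(1 + κk₁), P₂ = (1 − κk₂)/(1 + κk₂), and H² = ((k₁ − k₂)/(k₁ + k₂))². Then 1 + P₁·H² − H²/P₂ − P₁/P₂ = 4·κ·k₂·(k₁ − k₂) / ( (1 + κk₁)·(1 − κk₂)·(k₁ + k₂) ), and in particular this quantity is strictly positive. -/
import Mathlib


/-- the explicit formula and positivity of the quantity
`γ̂ = 1 + P₁H² − H²/P₂ − P₁/P₂` appearing in the sign analysis of the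
Wronskian. -/
theorem gamma_hat_positive (κ k₁ k₂ P₁ P₂ H2 : ℝ) (hκ : 0 < κ)
    (h0 : 0 < κ * k₂) (h1 : κ * k₂ < κ * k₁) (h2 : κ * k₁ < 1)
    (hP₁ : P₁ = (1 - κ * k₁) / (1 + κ * k₁))
    (hP₂ : P₂ = (1 - κ * k₂) / (1 + κ * k₂))
    (hH : H2 = ((k₁ - k₂) / (k₁ + k₂)) ^ 2) :
    1 + P₁ * H2 - H2 / P₂ - P₁ / P₂
      = 4 * κ * k₂ * (k₁ - k₂) / ((1 + κ * k₁) * (1 - κ * k₂) * (k₁ + k₂))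
    ∧ 0 < 1 + P₁ * H2 - H2 / P₂ - P₁ / P₂ := by
  have hk2 : 0 < k₂ := by nlinarith
  have hk1 : 0 < k₁ := by nlinarith
  have hd1 : (0:ℝ) < 1 + κ * k₁ := by nlinarith
  have hd2 : (0:ℝ) < 1 - κ * k₂ := by nlinarith
  have hd2' : (0:ℝ) < 1 + κ * k₂ := by nlinarith
  have hs : (0:ℝ) < k₁ + k₂ := by linarith
  have hdk : (0:ℝ) < k₁ - k₂ := by nlinarith
  have hP₂pos : 0 < P₂ := by rw [hP₂]; positivity
  have heq : 1 + P₁ * H2 - H2 / P₂ - P₁ / P₂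
      = 4 * κ * k₂ * (k₁ - k₂) / ((1 + κ * k₁) * (1 - κ * k₂) * (k₁ + k₂)) := by
    subst hP₁ hP₂ hH
    field_simp
    ring
  refine ⟨heq, ?_⟩
  rw [heq]
  positivity
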